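/- Let 𝒴 ⊆ L^0(Ω,𝐅_T,P) be any set of allowed exchanges with 0 ∈ 𝒴. If ℳ_e(𝒴) ≠ ∅, then NCA(𝒴) holds. -/

import Mathlib

open MeasureTheory Filter Topology

namespace CollectiveArb

variable {Ω : Type*}

/-- Terminal gains `K_i` of admissible (predictable) strategies for an agent with
filtration `F`, trading the assets indexed by `A`, over times `1,…,T`. -/
def gainsSet {J : ℕ} (F : ℕ → MeasurableSpace Ω) (T : ℕ)
    (A : Finset (Fin J)) (X : Fin J → ℕ → Ω → ℝ) : Set (Ω → ℝ) :=
  { g | ∃ H : Fin J → ℕ → Ω → ℝ,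
      (∀ j ∈ A, ∀ s, 1 ≤ s → s ≤ T → Measurable[F (s - 1)] (H j s)) ∧
      g = fun ω => ∑ j ∈ A, ∑ s ∈ Finset.Icc 1 T, H j s ω * (X j s ω - X j (s - 1) ω) }

/-- No collective arbitrage for the gains sets `K` and the exchange set `Y`:
`(K₁ × ⋯ × K_N + Y) ∩ L⁰₊ = {0}`. -/
def NCA {N : ℕ} [MeasurableSpace Ω] (P : Measure Ω)
    (K : Fin N → Set (Ω → ℝ)) (Y : Set (Fin N → Ω → ℝ)) : Prop :=
  ∀ k : Fin N → Ω → ℝ, ∀ y ∈ Y, (∀ i, k i ∈ K i) →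
    (∀ i, ∀ᵐ ω ∂P, 0 ≤ k i ω + y i ω) →
    ∀ i, (fun ω => k i ω + y i ω) =ᵐ[P] fun _ => (0 : ℝ)

/-- `K^𝒴 = ⨉ᵢ (Kᵢ − L⁰₊(ℱᵢ_T)) + 𝒴`. -/
def KY {N : ℕ} [MeasurableSpace Ω] (P : Measure Ω)
    (FT : Fin N → MeasurableSpace Ω)
    (K : Fin N → Set (Ω → ℝ)) (Y : Set (Fin N → Ω → ℝ)) : Set (Fin N → Ω → ℝ) :=
  { f | ∃ (k l y : Fin N → Ω → ℝ), y ∈ Y ∧ (∀ i, k i ∈ K i) ∧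
      (∀ i, Measurable[FT i] (l i) ∧ (∀ᵐ ω ∂P, 0 ≤ l i ω)) ∧
      ∀ i, f i = fun ω => k i ω - l i ω + y i ω }

/-- `ℝ^N_0`: zero-sum deterministic exchanges, viewed as constant random vectors. -/
def zeroSum (Ω : Type*) (N : ℕ) : Set (Fin N → Ω → ℝ) :=
  { y | ∃ x : Fin N → ℝ, (∑ i, x i) = 0 ∧ ∀ i, y i = fun _ => x i }

/-- `span(ℝ^N_0, Y_1, …, Y_R)`: the finite-dimensional space of exchanges generated
by `ℝ^N_0` and the random vectors `Ys 1, …, Ys R`. -/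
def spanExch {N R : ℕ} (Ys : Fin R → Fin N → Ω → ℝ) : Set (Fin N → Ω → ℝ) :=
  { y | ∃ (x : Fin N → ℝ) (c : Fin R → ℝ), (∑ i, x i) = 0 ∧
      ∀ i, y i = fun ω => x i + ∑ r, c r * Ys r i ω }

/-- `span(𝒴₀ ∪ {g})` for a vector subspace `𝒴₀`. -/
def spanWith {N : ℕ} (Y0 : Set (Fin N → Ω → ℝ)) (g : Fin N → Ω → ℝ) :
    Set (Fin N → Ω → ℝ) :=
  { y | ∃ w ∈ Y0, ∃ c : ℝ, ∀ i, y i = fun ω => w i ω + c * g i ω }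

/-- Equivalent martingale measures `Mᵢₑ` for the assets in `A`, w.r.t. the filtration `F`. -/
def martMeasures {J : ℕ} [MeasurableSpace Ω] (P : Measure Ω)
    (F : ℕ → MeasurableSpace Ω) (T : ℕ) (A : Finset (Fin J))
    (X : Fin J → ℕ → Ω → ℝ) : Set (Measure Ω) :=
  { Q | IsProbabilityMeasure Q ∧ Q ≪ P ∧ P ≪ Q ∧
      ∀ j ∈ A, (∀ t, t ≤ T → Integrable (X j t) Q) ∧
        ∀ s t, s ≤ t → t ≤ T → X j s =ᵐ[Q] Q[X j t | F s] }

/-- Equivalent collective martingale measures `ℳₑ(𝒴)`. -/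
def MeY {J N : ℕ} [MeasurableSpace Ω] (P : Measure Ω)
    (F : Fin N → ℕ → MeasurableSpace Ω) (T : ℕ) (assets : Fin N → Finset (Fin J))
    (X : Fin J → ℕ → Ω → ℝ) (Y : Set (Fin N → Ω → ℝ)) : Set (Fin N → Measure Ω) :=
  { Q | (∀ i, Q i ∈ martMeasures P (F i) T (assets i) X) ∧
      (∀ y ∈ Y, ∀ i, Integrable (y i) (Q i)) ∧
      ∀ y ∈ Y, (∑ i, ∫ ω, y i ω ∂(Q i)) ≤ 0 }

/-- `ℳ^φ_e(𝒴) = {Q ∈ ℳₑ(𝒴) : E_{Qⁱ}[|φⁱ|] < ∞ ∀ i}`. -/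
def MeYphi {J N : ℕ} [MeasurableSpace Ω] (P : Measure Ω)
    (F : Fin N → ℕ → MeasurableSpace Ω) (T : ℕ) (assets : Fin N → Finset (Fin J))
    (X : Fin J → ℕ → Ω → ℝ) (Y : Set (Fin N → Ω → ℝ))
    (φ : Fin N → Ω → ℝ) : Set (Fin N → Measure Ω) :=
  { Q | Q ∈ MeY P F T assets X Y ∧ ∀ i, Integrable (φ i) (Q i) }

/-- Closedness of a set of random vectors under componentwise `P`-a.s. convergence
of sequences (within `L⁰(Ω, 𝐅_T, P)`). -/
def ClosedAS {N : ℕ} [MeasurableSpace Ω] (P : Measure Ω)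
    (FT : Fin N → MeasurableSpace Ω) (S : Set (Fin N → Ω → ℝ)) : Prop :=
  ∀ (f : ℕ → Fin N → Ω → ℝ) (g : Fin N → Ω → ℝ),
    (∀ n, f n ∈ S) → (∀ i, Measurable[FT i] (g i)) →
    (∀ i, ∀ᵐ ω ∂P, Tendsto (fun n => f n i ω) atTop (𝓝 (g i ω))) →
    g ∈ S

/-- Collective superhedging price `ρ^𝒴₊(f)` (with `inf ∅ = +∞`). -/
noncomputable def rhoPlus {N : ℕ} [MeasurableSpace Ω] (P : Measure Ω)
    (K : Fin N → Set (Ω → ℝ)) (Y : Set (Fin N → Ω → ℝ))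
    (f : Fin N → Ω → ℝ) : EReal :=
  sInf { z : EReal | ∃ m : Fin N → ℝ, z = ((∑ i, m i : ℝ) : EReal) ∧
      ∃ k : Fin N → Ω → ℝ, (∀ i, k i ∈ K i) ∧ ∃ y ∈ Y,
        ∀ i, ∀ᵐ ω ∂P, f i ω ≤ m i + k i ω + y i ω }

/-- Collective subhedging price `ρ^𝒴₋(f)` (with `sup ∅ = −∞`). -/
noncomputable def rhoMinus {N : ℕ} [MeasurableSpace Ω] (P : Measure Ω)
    (K : Fin N → Set (Ω → ℝ)) (Y : Set (Fin N → Ω → ℝ))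
    (f : Fin N → Ω → ℝ) : EReal :=
  sSup { z : EReal | ∃ m : Fin N → ℝ, z = ((∑ i, m i : ℝ) : EReal) ∧
      ∃ k : Fin N → Ω → ℝ, (∀ i, k i ∈ K i) ∧ ∃ y ∈ Y,
        ∀ i, ∀ᵐ ω ∂P, m i + k i ω - y i ω ≤ f i ω }

/-- `ρ^𝒴₊(f)` is attained. -/
def rhoPlusAttained {N : ℕ} [MeasurableSpace Ω] (P : Measure Ω)
    (K : Fin N → Set (Ω → ℝ)) (Y : Set (Fin N → Ω → ℝ))
    (f : Fin N → Ω → ℝ) : Prop :=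
  ∃ (m : Fin N → ℝ) (k y : Fin N → Ω → ℝ), y ∈ Y ∧ (∀ i, k i ∈ K i) ∧
    (∀ i, ∀ᵐ ω ∂P, f i ω ≤ m i + k i ω + y i ω) ∧
    rhoPlus P K Y f = ((∑ i, m i : ℝ) : EReal)

/-- `ρ^𝒴₋(f)` is attained. -/
def rhoMinusAttained {N : ℕ} [MeasurableSpace Ω] (P : Measure Ω)
    (K : Fin N → Set (Ω → ℝ)) (Y : Set (Fin N → Ω → ℝ))
    (f : Fin N → Ω → ℝ) : Prop :=
  ∃ (m : Fin N → ℝ) (k y : Fin N → Ω → ℝ), y ∈ Y ∧ (∀ i, k i ∈ K i) ∧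
    (∀ i, ∀ᵐ ω ∂P, m i + k i ω - y i ω ≤ f i ω) ∧
    rhoMinus P K Y f = ((∑ i, m i : ℝ) : EReal)

/-- `f` is `𝒴`-collectively replicable: `f ∈ ℝ^N + (K₁ × ⋯ × K_N) + 𝒴` in `L⁰`. -/
def Replicable {N : ℕ} [MeasurableSpace Ω] (P : Measure Ω)
    (K : Fin N → Set (Ω → ℝ)) (Y : Set (Fin N → Ω → ℝ))
    (f : Fin N → Ω → ℝ) : Prop :=
  ∃ (m : Fin N → ℝ) (k y : Fin N → Ω → ℝ), y ∈ Y ∧ (∀ i, k i ∈ K i) ∧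
    ∀ i, f i =ᵐ[P] fun ω => m i + k i ω + y i ω


section Aux

variable {Ω : Type*} [m0 : MeasurableSpace Ω]

/-- Key analytic lemma: under a martingale measure, a gain of a predictable strategy
which is bounded below by an integrable nonnegative random variable is integrable with
nonpositive expectation. -/
lemma gain_integral_nonpos (Q : Measure Ω) [IsProbabilityMeasure Q]
    (F : ℕ → MeasurableSpace Ω) (hmono : Monotone F) (hle : ∀ t, F t ≤ m0)
    {J : ℕ} (T : ℕ) (A : Finset (Fin J)) (X H : Fin J → ℕ → Ω → ℝ)
    (hXint : ∀ j ∈ A, ∀ t, t ≤ T → Integrable (X j t) Q)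
    (hXadapt : ∀ j ∈ A, ∀ t, t ≤ T → Measurable[F t] (X j t))
    (hmart : ∀ j ∈ A, ∀ t, t + 1 ≤ T → X j t =ᵐ[Q] Q[X j (t+1) | F t])
    (hH : ∀ j ∈ A, ∀ s, 1 ≤ s → s ≤ T → Measurable[F (s-1)] (H j s))
    (W : Ω → ℝ) (hWint : Integrable W Q) (hWnn : ∀ ω, 0 ≤ W ω)
    (hWmeas : Measurable[F T] W)
    (hbd : ∀ᵐ ω ∂Q, -W ω ≤ ∑ j ∈ A, ∑ s ∈ Finset.Icc 1 T, H j s ω * (X j s ω - X j (s-1) ω)) :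
    Integrable (fun ω => ∑ j ∈ A, ∑ s ∈ Finset.Icc 1 T, H j s ω * (X j s ω - X j (s-1) ω)) Q ∧
      ∫ ω, (∑ j ∈ A, ∑ s ∈ Finset.Icc 1 T, H j s ω * (X j s ω - X j (s-1) ω)) ∂Q ≤ 0 := by
  classical
  set V : ℕ → Ω → ℝ :=
    fun t ω => ∑ j ∈ A, ∑ s ∈ Finset.Icc 1 t, H j s ω * (X j s ω - X j (s-1) ω) with hVdef
  suffices h : Integrable (V T) Q ∧ ∫ ω, V T ω ∂Q ≤ 0 by exact h
  -- basic facts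
  have hVsucc : ∀ t ω, V (t+1) ω = V t ω + ∑ j ∈ A, H j (t+1) ω * (X j (t+1) ω - X j t ω) := by
    intro t ω
    simp only [hVdef]
    rw [← Finset.sum_add_distrib]
    refine Finset.sum_congr rfl fun j hj => ?_
    rw [Finset.sum_Icc_succ_top (by omega : 1 ≤ t+1)]
    simp
  have hVmeas : ∀ t, t ≤ T → Measurable[F t] (V t) := by
    intro t ht
    refine Finset.measurable_sum _ fun j hj => ?_
    refine Finset.measurable_sum _ fun s hs => ?_
    simp only [Finset.mem_Icc] at hs
    have h1 : Measurable[F t] (H j s) :=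
      (hH j hj s hs.1 (le_trans hs.2 ht)).mono (hmono (by omega)) le_rfl
    have h2 : Measurable[F t] (X j s) :=
      (hXadapt j hj s (le_trans hs.2 ht)).mono (hmono hs.2) le_rfl
    have h3 : Measurable[F t] (X j (s-1)) :=
      (hXadapt j hj (s-1) (by omega)).mono (hmono (by omega)) le_rfl
    exact h1.mul (h2.sub h3)
  have hHmeas : ∀ t, t + 1 ≤ T → ∀ j ∈ A, Measurable[F t] (H j (t+1)) := by
    intro t ht j hj
    simpa using hH j hj (t+1) (by omega) ht
  have hΔint : ∀ j ∈ A, ∀ t, t+1 ≤ T → Integrable (fun ω => X j (t+1) ω - X j t ω) Q :=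
    fun j hj t ht => (hXint j hj (t+1) ht).sub (hXint j hj t (by omega))
  have hΔcond : ∀ j ∈ A, ∀ t, t+1 ≤ T →
      Q[fun ω => X j (t+1) ω - X j t ω | F t] =ᵐ[Q] 0 := by
    intro j hj t ht
    have hsub : (fun ω => X j (t+1) ω - X j t ω) = X j (t+1) - X j t := rfl
    rw [hsub]
    have h1 := condExp_sub (m := F t) (μ := Q) (hXint j hj (t+1) ht) (hXint j hj t (by omega))
    have h2 : Q[X j t | F t] = X j t :=
      condExp_of_stronglyMeasurable (hle t)
        ((hXadapt j hj t (by omega)).stronglyMeasurable) (hXint j hj t (by omega))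
    filter_upwards [h1, hmart j hj t ht] with ω e1 e2
    rw [h2] at e1
    simp only [Pi.sub_apply] at e1
    simp only [Pi.zero_apply, e1, ← e2, sub_self]
  -- pull-out property for bounded predictable factors
  have hpull : ∀ j ∈ A, ∀ t, t+1 ≤ T → ∀ (G : Ω → ℝ) (C : ℝ),
      Measurable[F t] G → (∀ ω, |G ω| ≤ C) →
      Integrable (fun ω => G ω * (X j (t+1) ω - X j t ω)) Q ∧
      Q[fun ω => G ω * (X j (t+1) ω - X j t ω) | F t] =ᵐ[Q] 0 := by
    intro j hj t ht G C hG hGb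
    have hGm0 : Measurable G := hG.mono (hle t) le_rfl
    have hint : Integrable (fun ω => G ω * (X j (t+1) ω - X j t ω)) Q :=
      (hΔint j hj t ht).bdd_mul hGm0.aestronglyMeasurable
        (ae_of_all _ fun ω => by simpa using hGb ω)
    refine ⟨hint, ?_⟩
    have hfg : (fun ω => G ω * (X j (t+1) ω - X j t ω))
        = G * (fun ω => X j (t+1) ω - X j t ω) := rfl
    rw [hfg]
    have hmul := condExp_mul_of_stronglyMeasurable_left (μ := Q) hG.stronglyMeasurable
      (by rw [← hfg]; exact hint) (hΔint j hj t ht)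
    refine hmul.trans ?_
    filter_upwards [hΔcond j hj t ht] with ω e2
    simp only [Pi.mul_apply, Pi.zero_apply] at e2 ⊢
    rw [e2, mul_zero]
  -- bounded measurable functions are integrable
  have hbddInt : ∀ (f : Ω → ℝ) (C : ℝ), Measurable f → (∀ ω, |f ω| ≤ C) → Integrable f Q := by
    intro f C hm hb
    exact (integrable_const C).mono' hm.aestronglyMeasurable
      (ae_of_all _ fun ω => by simpa using hb ω)

  -- downward induction: V t ≥ -E[W | F t] a.s.
  have down : ∀ d t, t + d = T → ∀ᵐ ω ∂Q, -(Q[W | F t]) ω ≤ V t ω := by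
    intro d
    induction d with
    | zero =>
      intro t ht
      have htT : t = T := by omega
      subst htT
      have hW' : Q[W | F t] = W :=
        condExp_of_stronglyMeasurable (hle t) hWmeas.stronglyMeasurable hWint
      rw [hW']
      exact hbd
    | succ d ih =>
      intro t ht
      have ht1 : t + 1 ≤ T := by omega
      have hstep := ih (t+1) (by omega)
      set R : Ω → ℝ := Q[W | F (t+1)] with hRdef
      have hRint : Integrable R Q := integrable_condExp
      have hRmeasF : Measurable[F (t+1)] R := stronglyMeasurable_condExp.measurable
      have hRmeas : Measurable R := hRmeasF.mono (hle (t+1)) le_rfl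
      -- truncation sets
      set Bs : ℕ → Set Ω := fun n =>
        {ω | |V t ω| ≤ (n:ℝ) ∧ ∀ j ∈ A, |H j (t+1) ω| ≤ (n:ℝ)} with hBsdef
      have hBmeas : ∀ n, MeasurableSet[F t] (Bs n) := by
        intro n
        have : Bs n = (V t ⁻¹' Set.Icc (-(n:ℝ)) n) ∩
            ⋂ (j : Fin J), ⋂ (_ : j ∈ A), (H j (t+1) ⁻¹' Set.Icc (-(n:ℝ)) n) := by
          ext ω
          simp only [hBsdef, Set.mem_setOf_eq, Set.mem_inter_iff, Set.mem_preimage,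
            Set.mem_Icc, Set.mem_iInter, abs_le]
        rw [this]
        refine MeasurableSet.inter ?_ (MeasurableSet.iInter fun j =>
          MeasurableSet.iInter fun hj => ?_)
        · exact (hVmeas t (by omega)) measurableSet_Icc
        · exact (hHmeas t ht1 j hj) measurableSet_Icc
      set χ : ℕ → Ω → ℝ := fun n => (Bs n).indicator (fun _ => (1:ℝ)) with hχdef
      have hχmeas : ∀ n, Measurable[F t] (χ n) :=
        fun n => measurable_const.indicator (hBmeas n)
      have hχ01 : ∀ n ω, χ n ω = 0 ∨ χ n ω = 1 := by
        intro n ω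
        by_cases h : ω ∈ Bs n <;> simp [hχdef, Set.indicator_apply, h]
      have hχnn : ∀ n ω, 0 ≤ χ n ω := by
        intro n ω; rcases hχ01 n ω with h | h <;> simp [h]
      have hχbd : ∀ n ω, |χ n ω| ≤ 1 := by
        intro n ω; rcases hχ01 n ω with h | h <;> simp [h]
      have hχone : ∀ n ω, ω ∈ Bs n → χ n ω = 1 := by
        intro n ω h; simp [hχdef, Set.indicator_apply, h]
      -- the key per-n estimate
      have key : ∀ n : ℕ, ∀ᵐ ω ∂Q, 0 ≤ χ n ω * (V t ω + (Q[W | F t]) ω) := by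
        intro n
        set fA : Ω → ℝ := fun ω => χ n ω * V t ω with hfAdef
        set fD : Ω → ℝ := fun ω =>
          ∑ j ∈ A, (χ n ω * H j (t+1) ω) * (X j (t+1) ω - X j t ω) with hfDdef
        set fR : Ω → ℝ := fun ω => χ n ω * R ω with hfRdef
        -- bounds for χ·H
        have hχH : ∀ j ∈ A, ∀ ω, |χ n ω * H j (t+1) ω| ≤ (n:ℝ) := by
          intro j hj ω
          by_cases h : ω ∈ Bs n
          · rw [hχone n ω h, one_mul]
            exact h.2 j hj
          · have : χ n ω = 0 := by simp [hχdef, Set.indicator_apply, h]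
            simp [this]
        have hχV : ∀ ω, |fA ω| ≤ (n:ℝ) := by
          intro ω
          by_cases h : ω ∈ Bs n
          · rw [hfAdef]; simp only; rw [hχone n ω h, one_mul]
            exact h.1
          · have : χ n ω = 0 := by simp [hχdef, Set.indicator_apply, h]
            simp [hfAdef, this]
        -- integrability of the three pieces
        have hfAmeasFt : Measurable[F t] fA := (hχmeas n).mul (hVmeas t (by omega))
        have hfAint : Integrable fA Q :=
          hbddInt fA n (hfAmeasFt.mono (hle t) le_rfl) hχV
        have hfDterm : ∀ j ∈ A,
            Integrable (fun ω => (χ n ω * H j (t+1) ω) * (X j (t+1) ω - X j t ω)) Q ∧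
            Q[fun ω => (χ n ω * H j (t+1) ω) * (X j (t+1) ω - X j t ω) | F t] =ᵐ[Q] 0 :=
          fun j hj => hpull j hj t ht1 _ n ((hχmeas n).mul (hHmeas t ht1 j hj)) (hχH j hj)
        have hfDint : Integrable fD Q :=
          integrable_finset_sum _ fun j hj => (hfDterm j hj).1
        have hfRint : Integrable fR Q :=
          hRint.bdd_mul ((hχmeas n).mono (hle t) le_rfl).aestronglyMeasurable
            (ae_of_all _ fun ω => by simpa using hχbd n ω)
        -- conditional expectations of the pieces
        have hcA : Q[fA | F t] = fA :=
          condExp_of_stronglyMeasurable (hle t) hfAmeasFt.stronglyMeasurable hfAint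
        have hcD : Q[fD | F t] =ᵐ[Q] 0 := by
          have hsum : fD = ∑ j ∈ A,
              fun ω => (χ n ω * H j (t+1) ω) * (X j (t+1) ω - X j t ω) := by
            funext ω; rw [hfDdef]; simp [Finset.sum_apply]
          rw [hsum]
          have h1 := condExp_finsetSum (μ := Q) (m := F t)
            (s := A) (f := fun j ω => (χ n ω * H j (t+1) ω) * (X j (t+1) ω - X j t ω))
            (fun j hj => (hfDterm j hj).1)
          refine h1.trans ?_
          have h2 : ∀ᵐ ω ∂Q, ∀ j ∈ A,
              (Q[fun ω => (χ n ω * H j (t+1) ω) * (X j (t+1) ω - X j t ω) | F t]) ω = 0 :=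
            (ae_ball_iff A.countable_toSet).2 fun j hj => (hfDterm j hj).2
          filter_upwards [h2] with ω hω
          simp only [Finset.sum_apply, Pi.zero_apply]
          exact Finset.sum_eq_zero fun j hj => hω j hj
        have hcR : Q[fR | F t] =ᵐ[Q] fun ω => χ n ω * (Q[W | F t]) ω := by
          have hfg : fR = (χ n) * R := rfl
          rw [hfg]
          have hmul := condExp_mul_of_stronglyMeasurable_left (μ := Q) (hχmeas n).stronglyMeasurable
            (by rw [← hfg]; exact hfRint) hRint
          refine hmul.trans ?_
          have htow : Q[R | F t] =ᵐ[Q] Q[W | F t] :=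
            condExp_condExp_of_le (hmono (Nat.le_succ t)) (hle (t+1))
          filter_upwards [htow] with ω e
          simp only [Pi.mul_apply]
          rw [e]
        -- nonnegativity
        have hgnn : 0 ≤ᵐ[Q] fun ω => fA ω + fD ω + fR ω := by
          filter_upwards [hstep] with ω hω
          have hsplit : fA ω + fD ω + fR ω = χ n ω * (V (t+1) ω + R ω) := by
            simp only [hfAdef, hfDdef, hfRdef, mul_assoc]
            rw [← Finset.mul_sum, hVsucc]
            ring
          simp only [Pi.zero_apply]
          rw [hsplit]
          exact mul_nonneg (hχnn n ω) (by linarith)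
        -- conditional expectation of the sum
        have he : (fun ω => fA ω + fD ω + fR ω) = (fA + fD) + fR := rfl
        have h1 := condExp_add (μ := Q) (m := F t) (hfAint.add hfDint) hfRint
        have h2 := condExp_add (μ := Q) (m := F t) hfAint hfDint
        have hc := condExp_nonneg (μ := Q) (m := F t) hgnn
        rw [he] at hc
        filter_upwards [hc, h1, h2, hcD, hcR] with ω e0 e1 e2 e3 e4
        rw [e1] at e0
        simp only [Pi.add_apply] at e0
        rw [e2] at e0
        simp only [Pi.add_apply, hcA] at e0
        rw [e3, e4] at e0
        simp only [Pi.zero_apply] at e0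
        have : fA ω = χ n ω * V t ω := by rw [hfAdef]
        rw [mul_add]
        rw [this] at e0
        linarith
      -- combine over n
      have hall : ∀ᵐ ω ∂Q, ∀ n : ℕ, 0 ≤ χ n ω * (V t ω + (Q[W | F t]) ω) :=
        ae_all_iff.2 key
      filter_upwards [hall] with ω hω
      obtain ⟨n, hn⟩ := exists_nat_ge (|V t ω| + ∑ j ∈ A, |H j (t+1) ω|)
      have hmem : ω ∈ Bs n := by
        constructor
        · have : (0:ℝ) ≤ ∑ j ∈ A, |H j (t+1) ω| :=
            Finset.sum_nonneg fun j _ => abs_nonneg _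
          linarith
        · intro j hj
          have h1 : |H j (t+1) ω| ≤ ∑ j ∈ A, |H j (t+1) ω| :=
            Finset.single_le_sum (f := fun j => |H j (t+1) ω|) (fun j _ => abs_nonneg _) hj
          have h2 : (0:ℝ) ≤ |V t ω| := abs_nonneg _
          linarith
      have hfin := hω n
      rw [hχone n ω hmem, one_mul] at hfin
      linarith

  -- forward induction: V t is integrable with nonpositive integral
  have fwd : ∀ t, t ≤ T → Integrable (V t) Q ∧ ∫ ω, V t ω ∂Q ≤ 0 := by
    intro t
    induction t with
    | zero =>
      intro _
      have h0 : V 0 = fun _ => 0 := by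
        funext ω; simp [hVdef]
      rw [h0]
      exact ⟨integrable_const 0, by simp⟩
    | succ t ih =>
      intro ht1
      obtain ⟨hVint, hVle⟩ := ih (by omega)
      set R : Ω → ℝ := Q[W | F (t+1)] with hRdef
      have hRint : Integrable R Q := integrable_condExp
      have hRmeasF : Measurable[F (t+1)] R := stronglyMeasurable_condExp.measurable
      have hRmeas : Measurable R := hRmeasF.mono (hle (t+1)) le_rfl
      have hlow : ∀ᵐ ω ∂Q, -(R ω) ≤ V (t+1) ω := by
        filter_upwards [down (T - (t+1)) (t+1) (by omega)] with ω h using h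
      set Bs : ℕ → Set Ω := fun n => {ω | ∀ j ∈ A, |H j (t+1) ω| ≤ (n:ℝ)} with hBsdef
      have hBmeas : ∀ n, MeasurableSet[F t] (Bs n) := by
        intro n
        have : Bs n = ⋂ (j : Fin J), ⋂ (_ : j ∈ A), (H j (t+1) ⁻¹' Set.Icc (-(n:ℝ)) n) := by
          ext ω
          simp only [hBsdef, Set.mem_setOf_eq, Set.mem_preimage, Set.mem_Icc,
            Set.mem_iInter, abs_le]
        rw [this]
        exact MeasurableSet.iInter fun j => MeasurableSet.iInter fun hj =>
          (hHmeas t ht1 j hj) measurableSet_Icc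
      set χ : ℕ → Ω → ℝ := fun n => (Bs n).indicator (fun _ => (1:ℝ)) with hχdef
      have hχmeasF : ∀ n, Measurable[F t] (χ n) :=
        fun n => measurable_const.indicator (hBmeas n)
      have hχmeas : ∀ n, Measurable (χ n) := fun n => (hχmeasF n).mono (hle t) le_rfl
      have hχ01 : ∀ n ω, χ n ω = 0 ∨ χ n ω = 1 := by
        intro n ω; by_cases h : ω ∈ Bs n <;> simp [hχdef, Set.indicator_apply, h]
      have hχbd : ∀ n ω, |χ n ω| ≤ 1 := by
        intro n ω; rcases hχ01 n ω with h | h <;> simp [h]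
      have hχnn : ∀ n ω, 0 ≤ χ n ω := by
        intro n ω; rcases hχ01 n ω with h | h <;> simp [h]
      have hχone : ∀ n ω, ω ∈ Bs n → χ n ω = 1 := by
        intro n ω h; simp [hχdef, Set.indicator_apply, h]
      have hχH : ∀ n, ∀ j ∈ A, ∀ ω, |χ n ω * H j (t+1) ω| ≤ (n:ℝ) := by
        intro n j hj ω
        by_cases h : ω ∈ Bs n
        · rw [hχone n ω h, one_mul]; exact h j hj
        · have h0 : χ n ω = 0 := by simp [hχdef, Set.indicator_apply, h]
          simp [h0]
      have hBev : ∀ ω, ∃ N : ℕ, ∀ n ≥ N, ω ∈ Bs n := by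
        intro ω
        obtain ⟨N, hN⟩ := exists_nat_ge (∑ j ∈ A, |H j (t+1) ω|)
        refine ⟨N, fun n hn j hj => ?_⟩
        have h1 : |H j (t+1) ω| ≤ ∑ j ∈ A, |H j (t+1) ω| :=
          Finset.single_le_sum (f := fun j => |H j (t+1) ω|) (fun j _ => abs_nonneg _) hj
        have h2 : (N:ℝ) ≤ (n:ℝ) := Nat.cast_le.2 hn
        linarith
      set fA : ℕ → Ω → ℝ := fun n ω => χ n ω * V t ω with hfAdef
      set fD : ℕ → Ω → ℝ := fun n ω =>
        ∑ j ∈ A, (χ n ω * H j (t+1) ω) * (X j (t+1) ω - X j t ω) with hfDdef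
      set fR : ℕ → Ω → ℝ := fun n ω => χ n ω * R ω with hfRdef
      set g : ℕ → Ω → ℝ := fun n ω => fA n ω + fD n ω + fR n ω with hgdef
      have hfAint : ∀ n, Integrable (fA n) Q := fun n =>
        hVint.bdd_mul (hχmeas n).aestronglyMeasurable (ae_of_all _ fun ω => by simpa using hχbd n ω)
      have hfDterm : ∀ n, ∀ j ∈ A,
          Integrable (fun ω => (χ n ω * H j (t+1) ω) * (X j (t+1) ω - X j t ω)) Q ∧
          Q[fun ω => (χ n ω * H j (t+1) ω) * (X j (t+1) ω - X j t ω) | F t] =ᵐ[Q] 0 :=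
        fun n j hj => hpull j hj t ht1 _ n ((hχmeasF n).mul (hHmeas t ht1 j hj)) (hχH n j hj)
      have hfDint : ∀ n, Integrable (fD n) Q := fun n =>
        integrable_finset_sum _ fun j hj => (hfDterm n j hj).1
      have hfRint : ∀ n, Integrable (fR n) Q := fun n =>
        hRint.bdd_mul (hχmeas n).aestronglyMeasurable (ae_of_all _ fun ω => by simpa using hχbd n ω)
      have hgint : ∀ n, Integrable (g n) Q := fun n =>
        (((hfAint n).add (hfDint n)).add (hfRint n)).congr (ae_of_all _ fun ω => rfl)
      have hfDzero : ∀ n, ∫ ω, fD n ω ∂Q = 0 := by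
        intro n
        simp only [hfDdef]
        rw [integral_finset_sum _ fun j hj => (hfDterm n j hj).1]
        refine Finset.sum_eq_zero fun j hj => ?_
        rw [← integral_condExp (hle t)
            (f := fun ω => (χ n ω * H j (t+1) ω) * (X j (t+1) ω - X j t ω)) (μ := Q),
          integral_congr_ae (hfDterm n j hj).2]
        simp
      have hsplit : ∀ n ω, g n ω = χ n ω * (V (t+1) ω + R ω) := by
        intro n ω
        simp only [hgdef, hfAdef, hfDdef, hfRdef, mul_assoc]
        rw [← Finset.mul_sum, hVsucc]
        ring
      have hgnn : ∀ n, 0 ≤ᵐ[Q] g n := by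
        intro n
        filter_upwards [hlow] with ω h
        have := hsplit n ω
        simp only [Pi.zero_apply]
        rw [this]
        exact mul_nonneg (hχnn n ω) (by linarith)
      -- convergence of the integrals
      have hAlim : Tendsto (fun n => ∫ ω, fA n ω ∂Q) atTop (𝓝 (∫ ω, V t ω ∂Q)) := by
        refine tendsto_integral_of_dominated_convergence (fun ω => |V t ω|)
          (fun n => (hfAint n).aestronglyMeasurable) hVint.abs ?_ ?_
        · intro n
          refine ae_of_all _ fun ω => ?_
          simp only [hfAdef, Real.norm_eq_abs, abs_mul]
          have := mul_le_mul_of_nonneg_right (hχbd n ω) (abs_nonneg (V t ω))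
          simpa using this
        · refine ae_of_all _ fun ω => ?_
          obtain ⟨N, hN⟩ := hBev ω
          refine tendsto_const_nhds.congr' ?_
          filter_upwards [eventually_ge_atTop N] with n hn
          simp only [hfAdef]
          rw [hχone n ω (hN n hn), one_mul]
      have hRlim : Tendsto (fun n => ∫ ω, fR n ω ∂Q) atTop (𝓝 (∫ ω, R ω ∂Q)) := by
        refine tendsto_integral_of_dominated_convergence (fun ω => |R ω|)
          (fun n => (hfRint n).aestronglyMeasurable) hRint.abs ?_ ?_
        · intro n
          refine ae_of_all _ fun ω => ?_
          simp only [hfRdef, Real.norm_eq_abs, abs_mul]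
          have := mul_le_mul_of_nonneg_right (hχbd n ω) (abs_nonneg (R ω))
          simpa using this
        · refine ae_of_all _ fun ω => ?_
          obtain ⟨N, hN⟩ := hBev ω
          refine tendsto_const_nhds.congr' ?_
          filter_upwards [eventually_ge_atTop N] with n hn
          simp only [hfRdef]
          rw [hχone n ω (hN n hn), one_mul]
      have hgint_eq : ∀ n, ∫ ω, g n ω ∂Q = ∫ ω, fA n ω ∂Q + ∫ ω, fR n ω ∂Q := by
        intro n
        have e1 : ∫ ω, ((fA n ω + fD n ω) + fR n ω) ∂Q
            = (∫ ω, (fA n ω + fD n ω) ∂Q) + ∫ ω, fR n ω ∂Q :=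
          integral_add ((hfAint n).add (hfDint n)) (hfRint n)
        have e2 : ∫ ω, (fA n ω + fD n ω) ∂Q = (∫ ω, fA n ω ∂Q) + ∫ ω, fD n ω ∂Q :=
          integral_add (hfAint n) (hfDint n)
        calc ∫ ω, g n ω ∂Q = ∫ ω, ((fA n ω + fD n ω) + fR n ω) ∂Q := by simp only [hgdef]
          _ = _ := by rw [e1, e2, hfDzero n]; ring
      have hglim : Tendsto (fun n => ∫ ω, g n ω ∂Q) atTop
          (𝓝 (∫ ω, V t ω ∂Q + ∫ ω, R ω ∂Q)) := by
        refine (hAlim.add hRlim).congr fun n => ?_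
        rw [hgint_eq n]
      have hRW : ∫ ω, R ω ∂Q = ∫ ω, W ω ∂Q := integral_condExp (hle (t+1)) (f := W) (μ := Q)
      -- measurability in m0
      have hV1m0 : Measurable (V (t+1)) := (hVmeas (t+1) ht1).mono (hle (t+1)) le_rfl
      have hVtm0 : Measurable (V t) := (hVmeas t (by omega)).mono (hle t) le_rfl
      have hgm0 : ∀ n, Measurable (g n) := by
        intro n
        have h1 : Measurable (fA n) := (hχmeas n).mul hVtm0
        have h2 : Measurable (fD n) := by
          refine Finset.measurable_sum _ fun j hj => ?_
          exact ((hχmeas n).mul ((hHmeas t ht1 j hj).mono (hle t) le_rfl)).mul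
            (((hXadapt j hj (t+1) ht1).mono (hle (t+1)) le_rfl).sub
              ((hXadapt j hj t (by omega)).mono (hle t) le_rfl))
        have h3 : Measurable (fR n) := (hχmeas n).mul hRmeas
        exact (h1.add h2).add h3
      have hmeasg : ∀ n, Measurable fun ω => ENNReal.ofReal (g n ω) :=
        fun n => ENNReal.measurable_ofReal.comp (hgm0 n)
      have hglimpt : ∀ ω, Tendsto (fun n => ENNReal.ofReal (g n ω)) atTop
          (𝓝 (ENNReal.ofReal (V (t+1) ω + R ω))) := by
        intro ω
        obtain ⟨N, hN⟩ := hBev ω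
        refine tendsto_const_nhds.congr' ?_
        filter_upwards [eventually_ge_atTop N] with n hn
        rw [hsplit n ω, hχone n ω (hN n hn), one_mul]
      have hfatou : ∫⁻ ω, ENNReal.ofReal (V (t+1) ω + R ω) ∂Q
          ≤ ENNReal.ofReal (∫ ω, V t ω ∂Q + ∫ ω, W ω ∂Q) := by
        have h1 : ∫⁻ ω, ENNReal.ofReal (V (t+1) ω + R ω) ∂Q
            = ∫⁻ ω, liminf (fun n => ENNReal.ofReal (g n ω)) atTop ∂Q :=
          lintegral_congr fun ω => ((hglimpt ω).liminf_eq).symm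
        rw [h1]
        refine le_trans (lintegral_liminf_le hmeasg) ?_
        have h2 : ∀ n, ∫⁻ ω, ENNReal.ofReal (g n ω) ∂Q = ENNReal.ofReal (∫ ω, g n ω ∂Q) :=
          fun n => (ofReal_integral_eq_lintegral_ofReal (hgint n) (hgnn n)).symm
        simp only [h2]
        have h3 : Tendsto (fun n => ENNReal.ofReal (∫ ω, g n ω ∂Q)) atTop
            (𝓝 (ENNReal.ofReal (∫ ω, V t ω ∂Q + ∫ ω, R ω ∂Q))) :=
          ENNReal.tendsto_ofReal hglim
        rw [h3.liminf_eq]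
        exact ENNReal.ofReal_le_ofReal (by rw [hRW])
      have hnnae : 0 ≤ᵐ[Q] fun ω => V (t+1) ω + R ω := by
        filter_upwards [hlow] with ω h
        simp only [Pi.zero_apply]
        linarith
      have hsm : AEStronglyMeasurable (fun ω => V (t+1) ω + R ω) Q :=
        (hV1m0.add hRmeas).aestronglyMeasurable
      have hsumint : Integrable (fun ω => V (t+1) ω + R ω) Q := by
        refine ⟨hsm, ?_⟩
        rw [hasFiniteIntegral_iff_norm]
        have heq : ∫⁻ ω, ENNReal.ofReal ‖V (t+1) ω + R ω‖ ∂Q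
            = ∫⁻ ω, ENNReal.ofReal (V (t+1) ω + R ω) ∂Q := by
          refine lintegral_congr_ae ?_
          filter_upwards [hnnae] with ω h
          rw [Real.norm_eq_abs, abs_of_nonneg h]
        rw [heq]
        exact lt_of_le_of_lt hfatou ENNReal.ofReal_lt_top
      have hV1int : Integrable (V (t+1)) Q := by
        have h := hsumint.sub hRint
        refine h.congr (ae_of_all _ fun ω => ?_)
        simp [Pi.sub_apply]
      refine ⟨hV1int, ?_⟩
      have hint_eq : ∫ ω, (V (t+1) ω + R ω) ∂Q
          = ∫ ω, V (t+1) ω ∂Q + ∫ ω, R ω ∂Q := integral_add hV1int hRint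
      have h5 : ∫ ω, (V (t+1) ω + R ω) ∂Q
          ≤ max (∫ ω, V t ω ∂Q + ∫ ω, W ω ∂Q) 0 := by
        rw [integral_eq_lintegral_of_nonneg_ae hnnae hsm]
        have h4 := ENNReal.toReal_mono ENNReal.ofReal_ne_top hfatou
        rwa [ENNReal.toReal_ofReal'] at h4
      have hWnn' : 0 ≤ ∫ ω, W ω ∂Q := integral_nonneg hWnn
      have heq2 : ∫ ω, V (t+1) ω ∂Q
          = ∫ ω, (V (t+1) ω + R ω) ∂Q - ∫ ω, R ω ∂Q := by rw [hint_eq]; ring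
      rw [heq2, hRW]
      rcases le_or_gt 0 (∫ ω, V t ω ∂Q + ∫ ω, W ω ∂Q) with h | h
      · rw [max_eq_left h] at h5; linarith
      · rw [max_eq_right (le_of_lt h)] at h5; linarith
  exact fwd T le_rfl

end Aux

/-- existence of equivalent collective martingale measures implies NCA. -/
theorem nca_of_MeY_nonempty
    {Ω : Type*} [m0 : MeasurableSpace Ω]
    (P : Measure Ω) [IsProbabilityMeasure P]
    (T J N : ℕ) (hT : 1 ≤ T) (hJ : 1 ≤ J) (hN : 1 ≤ N)
    (F : Fin N → ℕ → MeasurableSpace Ω)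
    (hFmono : ∀ i, Monotone (F i))
    (hFle : ∀ i t, F i t ≤ m0)
    (hFzero : ∀ i, ∀ A : Set Ω, MeasurableSet[F i 0] A → P A = 0 ∨ P A = 1)
    (X : Fin J → ℕ → Ω → ℝ)
    (assets : Fin N → Finset (Fin J))
    (hassets : ∀ i, (assets i).Nonempty)
    (hcover : ∀ j, ∃ i, j ∈ assets i)
    (hadapted : ∀ i, ∀ j ∈ assets i, ∀ t, t ≤ T → Measurable[F i t] (X j t))
    (𝒴 : Set (Fin N → Ω → ℝ))
    (h𝒴zero : (fun (_ : Fin N) (_ : Ω) => (0 : ℝ)) ∈ 𝒴)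
    (h𝒴meas : ∀ y ∈ 𝒴, ∀ i, Measurable[F i T] (y i))
    (hMeY : (MeY P F T assets X 𝒴).Nonempty) :
    NCA P (fun i => gainsSet (F i) T (assets i) X) 𝒴 := by
  obtain ⟨Q, hQ1, hQ2, hQ3⟩ := hMeY
  intro k y hy hk hpos
  have main : ∀ i, Integrable (fun ω => k i ω + y i ω) (Q i) ∧
      ∫ ω, (k i ω + y i ω) ∂(Q i) ≤ ∫ ω, y i ω ∂(Q i) ∧
      (∀ᵐ ω ∂(Q i), 0 ≤ k i ω + y i ω) := by
    intro i
    obtain ⟨hprob, hQP, hPQ, hmartX⟩ := hQ1 i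
    haveI : IsProbabilityMeasure (Q i) := hprob
    have hyint : Integrable (y i) (Q i) := hQ2 y hy i
    have hposQ : ∀ᵐ ω ∂(Q i), 0 ≤ k i ω + y i ω := (hpos i).filter_mono hQP.ae_le
    obtain ⟨Hi, hHi, hki⟩ := hk i
    have hbd : ∀ᵐ ω ∂(Q i), -|y i ω| ≤
        ∑ j ∈ assets i, ∑ s ∈ Finset.Icc 1 T, Hi j s ω * (X j s ω - X j (s-1) ω) := by
      filter_upwards [hposQ] with ω h
      have h2 : -|y i ω| ≤ k i ω := by
        have h3 := le_abs_self (y i ω)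
        linarith
      rw [hki] at h2
      simpa using h2
    have hgain := gain_integral_nonpos (Q i) (F i) (hFmono i) (hFle i) T (assets i) X Hi
      (fun j hj t ht => (hmartX j hj).1 t ht)
      (fun j hj t ht => hadapted i j hj t ht)
      (fun j hj t ht => (hmartX j hj).2 t (t+1) (Nat.le_succ t) ht)
      hHi
      (fun ω => |y i ω|) hyint.abs (fun ω => abs_nonneg _)
      (measurable_abs.comp (h𝒴meas y hy i))
      hbd
    have hkint : Integrable (k i) (Q i) := by
      rw [hki]; exact hgain.1
    have hkle : ∫ ω, k i ω ∂(Q i) ≤ 0 := by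
      simp only [hki]; exact hgain.2
    refine ⟨hkint.add hyint, ?_, hposQ⟩
    rw [integral_add hkint hyint]
    linarith
  have hann : ∀ i, 0 ≤ ∫ ω, (k i ω + y i ω) ∂(Q i) := fun i =>
    integral_nonneg_of_ae ((main i).2.2.mono fun ω h => by simpa using h)
  have hsum : ∑ i, ∫ ω, (k i ω + y i ω) ∂(Q i) ≤ 0 := by
    refine le_trans (Finset.sum_le_sum fun i _ => (main i).2.1) (hQ3 y hy)
  have hzero : ∀ i, ∫ ω, (k i ω + y i ω) ∂(Q i) = 0 := by
    intro i
    have h1 : ∫ ω, (k i ω + y i ω) ∂(Q i) ≤ ∑ i, ∫ ω, (k i ω + y i ω) ∂(Q i) :=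
      Finset.single_le_sum (f := fun i => ∫ ω, (k i ω + y i ω) ∂(Q i))
        (fun j _ => hann j) (Finset.mem_univ i)
    have h2 := hann i
    linarith
  intro i
  obtain ⟨hprob, hQP, hPQ, hmartX⟩ := hQ1 i
  haveI : IsProbabilityMeasure (Q i) := hprob
  have h0 : (fun ω => k i ω + y i ω) =ᵐ[Q i] 0 :=
    (integral_eq_zero_iff_of_nonneg_ae
      ((main i).2.2.mono fun ω h => by simpa using h) (main i).1).1 (hzero i)
  exact h0.filter_mono hPQ.ae_le


end CollectiveArb
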